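/- Let μ be a real number with μ ≠ 0 and μ ≠ 1, and let a, b, c : ℝ × ℝ → ℝ be continuous functions of (x, t). Suppose F : ℝ × ℝ → ℝ is continuously differentiable with F > 0, Fₓ(x,t) = μ·a(x,t)·F(x,t) and F_t(x,t) = (μ−1)·b(x,t)·F(x,t), and suppose G : ℝ × ℝ → ℝ is differentiable in x with Gₓ(x,t) = μ·(μ−1)·c(x,t)·F(x,t). Define the Lagrangian L(x, v, t) = F(x,t)·v^μ − G(x,t) (with v^μ = exp(μ·log v) for v > 0). Then a twice differentiable curve x : ℝ → ℝ with x'(t) > 0 for all t satisfies the Euler–Lagrange equation of L if and only if x''(t) + a(x(t),t)·x'(t)² + b(x(t),t)·x'(t) + c(x(t),t)·x'(t)^{2−μ} = 0 for all t ∈ ℝ. (This is the constructive content of the condition (μ−1)·bₓ = μ·a_t.) -/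

import Mathlib

/-- Partial derivative of the Lagrangian `L x v t` in the velocity argument. -/
noncomputable def pv (L : ℝ → ℝ → ℝ → ℝ) (x v t : ℝ) : ℝ := deriv (fun w => L x w t) v

/-- Partial derivative of the Lagrangian `L x v t` in the position argument. -/
noncomputable def px (L : ℝ → ℝ → ℝ → ℝ) (x v t : ℝ) : ℝ := deriv (fun y => L y v t) x

/-- A curve `x` satisfies the Euler–Lagrange equation of `L`:
`(d/dt)[(∂L/∂v)(x t, x' t, t)] = (∂L/∂x)(x t, x' t, t)` for all `t`. -/
def SatisfiesEL (L : ℝ → ℝ → ℝ → ℝ) (x : ℝ → ℝ) : Prop :=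
  ∀ t : ℝ, deriv (fun s => pv L (x s) (deriv x s) s) t = px L (x t) (deriv x t) t

/-- Partial derivative of `f (x, t)` in the first argument. -/
noncomputable def pd1 (f : ℝ × ℝ → ℝ) (x t : ℝ) : ℝ := deriv (fun y => f (y, t)) x

/-- Partial derivative of `f (x, t)` in the second argument. -/
noncomputable def pd2 (f : ℝ × ℝ → ℝ) (x t : ℝ) : ℝ := deriv (fun s => f (x, s)) t

theorem monomial_lagrangian_general
    (μ : ℝ) (hμ0 : μ ≠ 0) (hμ1 : μ ≠ 1)
    (a b c : ℝ × ℝ → ℝ) (ha : Continuous a) (hb : Continuous b) (hc : Continuous c)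
    (F : ℝ × ℝ → ℝ) (hF : ContDiff ℝ 1 F) (hFpos : ∀ x t : ℝ, 0 < F (x, t))
    (hFx : ∀ x t : ℝ, pd1 F x t = μ * a (x, t) * F (x, t))
    (hFt : ∀ x t : ℝ, pd2 F x t = (μ - 1) * b (x, t) * F (x, t))
    (G : ℝ × ℝ → ℝ)
    (hG : ∀ x t : ℝ, HasDerivAt (fun y => G (y, t)) (μ * (μ - 1) * c (x, t) * F (x, t)) x)
    (L : ℝ → ℝ → ℝ → ℝ)
    (hL : ∀ x t : ℝ, ∀ v : ℝ, 0 < v → L x v t = F (x, t) * v ^ μ - G (x, t))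
    (x : ℝ → ℝ) (hx : Differentiable ℝ x) (hx' : Differentiable ℝ (deriv x))
    (hxpos : ∀ t : ℝ, 0 < deriv x t) :
    SatisfiesEL L x ↔
      ∀ t : ℝ, deriv (deriv x) t + a (x t, t) * (deriv x t) ^ 2
        + b (x t, t) * deriv x t + c (x t, t) * (deriv x t) ^ (2 - μ) = 0 := by
  have hFd := hF.differentiable one_ne_zero
  -- directional derivative facts for F
  have hfd1 : ∀ X t : ℝ, HasDerivAt (fun y => F (y, t)) (fderiv ℝ F (X, t) (1, 0)) X := by
    intro X t
    have h1 : HasDerivAt (fun y : ℝ => ((y, t) : ℝ × ℝ)) (1, 0) X :=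
      HasDerivAt.prodMk (hasDerivAt_id X) (hasDerivAt_const X t)
    exact (hFd (X, t)).hasFDerivAt.comp_hasDerivAt X h1
  have hfd2 : ∀ X t : ℝ, HasDerivAt (fun s => F (X, s)) (fderiv ℝ F (X, t) (0, 1)) t := by
    intro X t
    have h1 : HasDerivAt (fun s : ℝ => ((X, s) : ℝ × ℝ)) (0, 1) t :=
      HasDerivAt.prodMk (hasDerivAt_const t X) (hasDerivAt_id t)
    exact (hFd (X, t)).hasFDerivAt.comp_hasDerivAt t h1
  have hfx : ∀ X t : ℝ, fderiv ℝ F (X, t) (1, 0) = μ * a (X, t) * F (X, t) := by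
    intro X t
    rw [← hFx X t]
    exact ((hfd1 X t).deriv).symm
  have hft : ∀ X t : ℝ, fderiv ℝ F (X, t) (0, 1) = (μ - 1) * b (X, t) * F (X, t) := by
    intro X t
    rw [← hFt X t]
    exact ((hfd2 X t).deriv).symm
  have hFX : ∀ X t : ℝ, HasDerivAt (fun y => F (y, t)) (μ * a (X, t) * F (X, t)) X := by
    intro X t
    have := hfd1 X t
    rwa [hfx X t] at this
  -- derivative of F along the curve
  have hFcurve : ∀ t : ℝ, HasDerivAt (fun s => F (x s, s))
      (μ * a (x t, t) * F (x t, t) * deriv x t + (μ - 1) * b (x t, t) * F (x t, t)) t := by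
    intro t
    have h1 : HasDerivAt (fun s : ℝ => ((x s, s) : ℝ × ℝ)) (deriv x t, 1) t :=
      HasDerivAt.prodMk ((hx t).hasDerivAt) (hasDerivAt_id t)
    have h2 : HasDerivAt (fun s => F (x s, s)) (fderiv ℝ F (x t, t) (deriv x t, 1)) t :=
      (hFd (x t, t)).hasFDerivAt.comp_hasDerivAt_of_eq t h1 rfl
    have h3 : fderiv ℝ F (x t, t) (deriv x t, 1)
        = μ * a (x t, t) * F (x t, t) * deriv x t + (μ - 1) * b (x t, t) * F (x t, t) := by
      have hdec : ((deriv x t, 1) : ℝ × ℝ) = deriv x t • ((1 : ℝ), (0 : ℝ)) + ((0 : ℝ), (1 : ℝ)) := by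
        simp [Prod.ext_iff]
      rw [hdec, map_add, map_smul, hfx, hft, smul_eq_mul]
      ring
    rwa [h3] at h2
  -- the velocity partial derivative
  have hpv : ∀ X t v : ℝ, 0 < v → pv L X v t = F (X, t) * (μ * v ^ (μ - 1)) := by
    intro X t v hv
    have hev : (fun w => L X w t) =ᶠ[nhds v] (fun w => F (X, t) * w ^ μ - G (X, t)) := by
      filter_upwards [eventually_gt_nhds hv] with w hw
      exact hL X t w hw
    have hd : HasDerivAt (fun w : ℝ => F (X, t) * w ^ μ - G (X, t))
        (F (X, t) * (μ * v ^ (μ - 1))) v :=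
      ((Real.hasDerivAt_rpow_const (Or.inl hv.ne')).const_mul (F (X, t))).sub_const (G (X, t))
    unfold pv
    rw [hev.deriv_eq, hd.deriv]
  -- the position partial derivative
  have hpx : ∀ t : ℝ, px L (x t) (deriv x t) t
      = μ * a (x t, t) * F (x t, t) * (deriv x t) ^ μ
        - μ * (μ - 1) * c (x t, t) * F (x t, t) := by
    intro t
    have hfun : (fun y => L y (deriv x t) t) = fun y => F (y, t) * (deriv x t) ^ μ - G (y, t) :=
      funext fun y => hL y t _ (hxpos t)
    have hd : HasDerivAt (fun y => F (y, t) * (deriv x t) ^ μ - G (y, t))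
        (μ * a (x t, t) * F (x t, t) * (deriv x t) ^ μ
          - μ * (μ - 1) * c (x t, t) * F (x t, t)) (x t) :=
      ((hFX (x t) t).mul_const ((deriv x t) ^ μ)).sub (hG (x t) t)
    unfold px
    rw [hfun]
    exact hd.deriv
  -- main time derivative
  have hmain : ∀ t : ℝ, deriv (fun s => pv L (x s) (deriv x s) s) t
      = (μ * a (x t, t) * F (x t, t) * deriv x t + (μ - 1) * b (x t, t) * F (x t, t))
          * (μ * (deriv x t) ^ (μ - 1))
        + F (x t, t) * (μ * ((μ - 1) * (deriv x t) ^ (μ - 1 - 1) * deriv (deriv x) t)) := by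
    intro t
    have hfun : (fun s => pv L (x s) (deriv x s) s)
        = fun s => F (x s, s) * (μ * (deriv x s) ^ (μ - 1)) :=
      funext fun s => hpv (x s) s (deriv x s) (hxpos s)
    rw [hfun]
    have h2 : HasDerivAt (fun s => (deriv x s) ^ (μ - 1))
        ((μ - 1) * (deriv x t) ^ (μ - 1 - 1) * deriv (deriv x) t) t :=
      (Real.hasDerivAt_rpow_const (p := μ - 1) (Or.inl (hxpos t).ne')).comp t ((hx' t).hasDerivAt)
    exact ((hFcurve t).mul (h2.const_mul μ)).deriv
  unfold SatisfiesEL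
  refine forall_congr' fun t => ?_
  rw [hmain t, hpx t, show μ - 1 - 1 = μ - 2 from by ring]
  set v := deriv x t with hvdef
  set w := deriv (deriv x) t with hwdef
  have hv0 : 0 < v := hxpos t
  have e1 : v ^ (μ - 1) = v ^ (μ - 2) * v := by
    rw [show μ - 1 = (μ - 2) + 1 from by ring, Real.rpow_add hv0, Real.rpow_one]
  have e2 : v ^ μ = v ^ (μ - 2) * v ^ 2 := by
    rw [show μ = (μ - 2) + 2 from by ring, Real.rpow_add hv0]
    norm_num
  have e3 : v ^ (μ - 2) * v ^ (2 - μ) = 1 := by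
    rw [← Real.rpow_add hv0]
    norm_num
  have hK : μ * (μ - 1) * F (x t, t) * v ^ (μ - 2) ≠ 0 :=
    mul_ne_zero (mul_ne_zero (mul_ne_zero hμ0 (sub_ne_zero.mpr hμ1)) (hFpos (x t) t).ne')
      (Real.rpow_pos_of_pos hv0 _).ne'
  rw [e1, e2]
  constructor
  · intro h
    have h2 : (μ * (μ - 1) * F (x t, t) * v ^ (μ - 2))
        * (w + a (x t, t) * v ^ 2 + b (x t, t) * v + c (x t, t) * v ^ (2 - μ)) = 0 := by
      linear_combination h + μ * (μ - 1) * c (x t, t) * F (x t, t) * e3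
    exact (mul_eq_zero.mp h2).resolve_left hK
  · intro h
    linear_combination (μ * (μ - 1) * F (x t, t) * v ^ (μ - 2)) * h
      - μ * (μ - 1) * c (x t, t) * F (x t, t) * e3
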